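/- Let H be a Dedekind-finite monoid. For all units u, v of H and every irreducible element A of the reduced finitary power monoid P_{fin,1}(H), the set uAv is an irreducible element of the restricted finitary power monoid P_{fin,×}(H). -/
import Mathlib


open scoped Pointwise

/-- Two-sided divisibility in a monoid: `x` divides `y` if `y = u * x * v` for some `u, v`. -/
def DvdTS {M : Type*} [Monoid M] (x y : M) : Prop := ∃ u v : M, y = u * x * v

/-- A unit-divisor is a divisor of the identity. -/
def IsUnitDivisor {M : Type*} [Monoid M] (x : M) : Prop := DvdTS x 1

/-- `x` is a proper divisor of `y` if `x` divides `y` but `y` does not divide `x`. -/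
def IsProperDivisorTS {M : Type*} [Monoid M] (x y : M) : Prop := DvdTS x y ∧ ¬ DvdTS y x

/-- An atom is a non-unit that is not a product of two non-units. -/
def IsAtomTS {M : Type*} [Monoid M] (a : M) : Prop :=
  ¬ IsUnit a ∧ ∀ b c : M, a = b * c → IsUnit b ∨ IsUnit c

/-- A quark is a non-unit-divisor all of whose proper divisors are unit-divisors. -/
def IsQuarkTS {M : Type*} [Monoid M] (a : M) : Prop :=
  ¬ IsUnitDivisor a ∧ ∀ b : M, IsProperDivisorTS b a → IsUnitDivisor b

/-- An irreducible is a non-unit-divisor with no factorization `a = b * c` into proper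
divisors that are not unit-divisors. -/
def IsIrredTS {M : Type*} [Monoid M] (a : M) : Prop :=
  ¬ IsUnitDivisor a ∧
    ¬ ∃ b c : M, a = b * c ∧ IsProperDivisorTS b a ∧ IsProperDivisorTS c a ∧
      ¬ IsUnitDivisor b ∧ ¬ IsUnitDivisor c

def DedekindFiniteM (M : Type*) [Monoid M] : Prop := ∀ x y : M, x * y = 1 → y * x = 1

/-- ACC on principal two-sided ideals: no infinite sequence of consecutive proper divisors. -/
def ACCPrincipalTS (M : Type*) [Monoid M] : Prop :=
  ¬ ∃ f : ℕ → M, ∀ n : ℕ, IsProperDivisorTS (f (n + 1)) (f n)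

/-- Factorable: every non-unit-divisor is a (non-empty) product of irreducibles. -/
def FactorableM (M : Type*) [Monoid M] : Prop :=
  ∀ x : M, ¬ IsUnitDivisor x →
    ∃ l : List M, l ≠ [] ∧ (∀ a ∈ l, IsIrredTS a) ∧ l.prod = x

/-- Atomic: every non-unit-divisor is a (non-empty) product of atoms. -/
def AtomicM (M : Type*) [Monoid M] : Prop :=
  ∀ x : M, ¬ IsUnitDivisor x →
    ∃ l : List M, l ≠ [] ∧ (∀ a ∈ l, IsAtomTS a) ∧ l.prod = x

/-- The finitary power monoid: non-empty finite subsets of `H` under setwise multiplication. -/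
def PfinM (H : Type*) [Monoid H] : Submonoid (Set H) where
  carrier := {X : Set H | X.Finite ∧ X.Nonempty}
  mul_mem' := fun hX hY => ⟨hX.1.mul hY.1, hX.2.mul hY.2⟩
  one_mem' := ⟨Set.finite_one, 1, Set.mem_one.mpr rfl⟩

/-- The restricted finitary power monoid: non-empty finite subsets of `H` containing a unit. -/
def PfinTimes (H : Type*) [Monoid H] : Submonoid (Set H) where
  carrier := {X : Set H | X.Finite ∧ ∃ u ∈ X, IsUnit u}
  mul_mem' := by
    rintro X Y ⟨hXf, u, hu, hu'⟩ ⟨hYf, v, hv, hv'⟩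
    exact ⟨hXf.mul hYf, u * v, Set.mul_mem_mul hu hv, hu'.mul hv'⟩
  one_mem' := ⟨Set.finite_one, 1, Set.mem_one.mpr rfl, isUnit_one⟩

/-- The reduced finitary power monoid: finite subsets of `H` containing `1`. -/
def PfinOne (H : Type*) [Monoid H] : Submonoid (Set H) where
  carrier := {X : Set H | X.Finite ∧ (1 : H) ∈ X}
  mul_mem' := by
    rintro X Y ⟨hXf, hX1⟩ ⟨hYf, hY1⟩
    exact ⟨hXf.mul hYf, by simpa using Set.mul_mem_mul hX1 hY1⟩
  one_mem' := ⟨Set.finite_one, Set.mem_one.mpr rfl⟩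

lemma mem_PfinM {H : Type*} [Monoid H] {X : Set H} :
    X ∈ PfinM H ↔ X.Finite ∧ X.Nonempty := Iff.rfl

lemma mem_PfinTimes {H : Type*} [Monoid H] {X : Set H} :
    X ∈ PfinTimes H ↔ X.Finite ∧ ∃ u ∈ X, IsUnit u := Iff.rfl

lemma mem_PfinOne {H : Type*} [Monoid H] {X : Set H} :
    X ∈ PfinOne H ↔ X.Finite ∧ (1 : H) ∈ X := Iff.rfl

/-- Acyclic: `u * x * v ≠ x` whenever `u` or `v` is a non-unit. -/
def AcyclicM (M : Type*) [Monoid M] : Prop :=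
  ∀ u v x : M, (¬ IsUnit u ∨ ¬ IsUnit v) → u * x * v ≠ x

/-- Unit-cancellative: `x * y ≠ x ≠ y * x` whenever `y` is a non-unit. -/
def UnitCancellativeM (M : Type*) [Monoid M] : Prop :=
  ∀ x y : M, ¬ IsUnit y → x * y ≠ x ∧ y * x ≠ x

/-- Strongly unit-cancellative: `x * y ≠ x ≠ y * x` whenever `y ≠ 1`. -/
def StrongUnitCancellativeM (M : Type*) [Monoid M] : Prop :=
  ∀ x y : M, y ≠ 1 → x * y ≠ x ∧ y * x ≠ x

/-- Torsion-free: the identity is the only element with finitely many powers. -/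
def TorsionFreeM (M : Type*) [Monoid M] : Prop :=
  ∀ x : M, (Set.range fun k : ℕ => x ^ k).Finite → x = 1

/-- Cancellative monoid. -/
def CancellativeM (M : Type*) [Monoid M] : Prop :=
  ∀ a x y : M, (a * x = a * y → x = y) ∧ (x * a = y * a → x = y)

/-- The set of lengths of (irreducible) factorizations of `x`, with the conventions
`L(1) = {0}` and `L(u) = ∅` for a unit-divisor `u ≠ 1`. -/
def LengthSet {M : Type*} [Monoid M] (x : M) : Set ℕ :=
  {n | (x = 1 ∧ n = 0) ∨
    (¬ IsUnitDivisor x ∧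
      ∃ l : List M, l.length = n ∧ l ≠ [] ∧ (∀ a ∈ l, IsIrredTS a) ∧ l.prod = x)}

/-- The system of lengths: the family of non-empty length sets. -/
def SystemOfLengths (M : Type*) [Monoid M] : Set (Set ℕ) :=
  {L | L.Nonempty ∧ ∃ x : M, LengthSet x = L}

section irredHelpers
variable {H₀ : Type*} [Monoid H₀]

lemma mul4_aux {s t : H₀} (hst : s * t = 1) (r x y w : H₀) :
    (r * x * s) * (t * y * w) = r * (x * y) * w := by
  rw [show (r * x * s) * (t * y * w) = r * (x * (s * t) * (y * w)) by simp [mul_assoc], hst]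
  simp [mul_assoc]

lemma img_mul_img {s t : H₀} (hst : s * t = 1) (r w : H₀) (X Y : Set H₀) :
    ((fun x => r * x * s) '' X) * ((fun y => t * y * w) '' Y)
      = (fun z => r * z * w) '' (X * Y) := by
  ext a
  simp only [Set.mem_mul, Set.mem_image]
  constructor
  · rintro ⟨-, ⟨x, hx, rfl⟩, -, ⟨y, hy, rfl⟩, rfl⟩
    exact ⟨x * y, ⟨x, hx, y, hy, rfl⟩, (mul4_aux hst r x y w).symm⟩
  · rintro ⟨z, ⟨x, hx, y, hy, rfl⟩, rfl⟩
    exact ⟨r * x * s, ⟨x, hx, rfl⟩, t * y * w, ⟨y, hy, rfl⟩, mul4_aux hst r x y w⟩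

lemma img_img (a b c d : H₀) (S : Set H₀) :
    (fun x => a * x * b) '' ((fun x => c * x * d) '' S)
      = (fun x => (a * c) * x * (d * b)) '' S := by
  rw [Set.image_image]
  congr 1
  funext x
  simp [mul_assoc]

end irredHelpers

/-- if `H` is Dedekind-finite, `u, v` are units of `H` and `A` is irreducible
in `P_{fin,1}(H)`, then `uAv` is irreducible in `P_{fin,×}(H)`. -/
lemma pfin_aux {H : Type*} [Monoid H]
    (hH : DedekindFiniteM H) (A : PfinOne H) (hA : IsIrredTS A)
    (u v : Hˣ) (S : Set H) (hS : S ∈ PfinTimes H)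
    (hSeq : S = (fun a => (u : H) * a * (v : H)) '' (A : Set H)) :
    IsIrredTS (⟨S, hS⟩ : PfinTimes H) := by
  subst hSeq
  obtain ⟨hAfin, hA1⟩ := mem_PfinOne.mp A.2
  constructor
  · -- uAv is not a unit-divisor
    rintro ⟨B, C, h1⟩
    have hset : (1 : Set H) = (B : Set H) * ((fun a => (u : H) * a * (v : H)) '' (A : Set H)) * (C : Set H) := by
      have := congrArg (Subtype.val) h1
      simpa using this
    obtain ⟨hBf, b, hbB, -⟩ := mem_PfinTimes.mp B.2
    obtain ⟨hCf, c, hcC, -⟩ := mem_PfinTimes.mp C.2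
    have key : ∀ a ∈ (A : Set H), b * ((u : H) * a * (v : H)) * c = 1 := by
      intro a ha
      have hmem : b * ((u : H) * a * (v : H)) * c ∈ (1 : Set H) := by
        rw [hset]
        exact Set.mul_mem_mul (Set.mul_mem_mul hbB (Set.mem_image_of_mem _ ha)) hcC
      rwa [Set.mem_one] at hmem
    set p : H := b * (u : H) with hp
    set w : H := (v : H) * c with hw
    have hpw : p * w = 1 := by
      have := key 1 hA1
      rw [hp, hw]
      rw [show b * (u : H) * ((v : H) * c) = b * ((u : H) * 1 * (v : H)) * c by simp [mul_assoc]]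
      exact this
    have hwp : w * p = 1 := hH _ _ hpw
    have keya : ∀ a ∈ (A : Set H), a = 1 := by
      intro a ha
      have h2 : p * (a * w) = 1 := by
        rw [show p * (a * w) = b * ((u : H) * a * (v : H)) * c by rw [hp, hw]; simp [mul_assoc]]
        exact key a ha
      have h3 : (a * w) * p = 1 := hH _ _ h2
      calc a = a * (w * p) := by rw [hwp, mul_one]
        _ = (a * w) * p := (mul_assoc a w p).symm
        _ = 1 := h3
    have hAone : (A : Set H) = {1} := Set.eq_singleton_iff_unique_mem.mpr ⟨hA1, keya⟩
    have : A = 1 := Subtype.ext (by rw [hAone]; rfl)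
    exact hA.1 ⟨1, 1, by rw [this]; simp⟩
  · -- no factorization into proper non-unit-divisors
    rintro ⟨B, C, hfac, ⟨hBd, hBnd⟩, ⟨hCd, hCnd⟩, hBnu, hCnu⟩
    obtain ⟨hBf, -, -, -⟩ := mem_PfinTimes.mp B.2
    obtain ⟨hCf, -, -, -⟩ := mem_PfinTimes.mp C.2
    have hset : (fun a => (u : H) * a * (v : H)) '' (A : Set H) = (B : Set H) * (C : Set H) := by
      have := congrArg (Subtype.val) hfac
      simpa using this
    have huv : ((u : H) * 1 * (v : H) : H) ∈ (B : Set H) * (C : Set H) := by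
      rw [← hset]; exact Set.mem_image_of_mem _ hA1
    rw [Set.mem_mul] at huv
    obtain ⟨β, hβ, γ, hγ, hβγ⟩ := huv
    set p : H := ((u⁻¹ : Hˣ) : H) * β with hpdef
    set q : H := γ * ((v⁻¹ : Hˣ) : H) with hqdef
    have hpq : p * q = 1 := by
      rw [hpdef, hqdef, show ((u⁻¹ : Hˣ) : H) * β * (γ * ((v⁻¹ : Hˣ) : H)) = ((u⁻¹ : Hˣ) : H) * (β * γ) * ((v⁻¹ : Hˣ) : H) by simp [mul_assoc],
        hβγ]
      simp [mul_assoc]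
    have hqp : q * p = 1 := hH _ _ hpq
    have hpu : IsUnit p := isUnit_iff_exists.mpr ⟨q, hpq, hqp⟩
    have hqu : IsUnit q := isUnit_iff_exists.mpr ⟨p, hqp, hpq⟩
    set B₁ : Set H := (fun x => ((u⁻¹ : Hˣ) : H) * x * q) '' (B : Set H) with hB₁def
    set C₁ : Set H := (fun y => p * y * ((v⁻¹ : Hˣ) : H)) '' (C : Set H) with hC₁def
    have hB₁mem : B₁ ∈ PfinOne H :=
      ⟨hBf.image _, ⟨β, hβ, hpq⟩⟩
    have hC₁mem : C₁ ∈ PfinOne H :=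
      ⟨hCf.image _, ⟨γ, hγ, by show p * γ * ((v⁻¹ : Hˣ) : H) = 1; rw [mul_assoc, ← hqdef]; exact hpq⟩⟩
    have hprod : B₁ * C₁ = (A : Set H) := by
      rw [hB₁def, hC₁def, img_mul_img hqp, ← hset, img_img]
      simp
    have hB : (fun x => (u : H) * x * p) '' B₁ = (B : Set H) := by
      rw [hB₁def, img_img]
      simp [hqp]
    have hC : (fun y => q * y * (v : H)) '' C₁ = (C : Set H) := by
      rw [hC₁def, img_img]
      simp [hqp]
    have hfac1 : A = (⟨B₁, hB₁mem⟩ : PfinOne H) * ⟨C₁, hC₁mem⟩ :=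
      Subtype.ext hprod.symm
    refine hA.2 ⟨⟨B₁, hB₁mem⟩, ⟨C₁, hC₁mem⟩, hfac1, ⟨?_, ?_⟩, ⟨?_, ?_⟩, ?_, ?_⟩
    · exact ⟨1, ⟨C₁, hC₁mem⟩, by rw [one_mul]; exact hfac1⟩
    · -- A does not divide B₁ in PfinOne
      rintro ⟨X, Y, hXY⟩
      obtain ⟨hXf, hX1⟩ := mem_PfinOne.mp X.2
      obtain ⟨hYf, hY1⟩ := mem_PfinOne.mp Y.2
      have hXYs : B₁ = (X : Set H) * (A : Set H) * (Y : Set H) := by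
        have := congrArg (Subtype.val) hXY
        simpa using this
      refine hBnd ⟨⟨(fun x => (u : H) * x * ((u⁻¹ : Hˣ) : H)) '' (X : Set H),
        mem_PfinTimes.mpr ⟨hXf.image _, (u : H) * 1 * ((u⁻¹ : Hˣ) : H), Set.mem_image_of_mem _ hX1, by simp⟩⟩,
        ⟨(fun y => ((v⁻¹ : Hˣ) : H) * y * p) '' (Y : Set H),
        mem_PfinTimes.mpr ⟨hYf.image _, ((v⁻¹ : Hˣ) : H) * 1 * p, Set.mem_image_of_mem _ hY1,
          by simpa using (v⁻¹ : Hˣ).isUnit.mul hpu⟩⟩, ?_⟩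
      apply Subtype.ext
      show (B : Set H) = ((fun x => (u : H) * x * ((u⁻¹ : Hˣ) : H)) '' (X : Set H)) *
        ((fun a => (u : H) * a * (v : H)) '' (A : Set H)) * ((fun y => ((v⁻¹ : Hˣ) : H) * y * p) '' (Y : Set H))
      rw [img_mul_img u.inv_mul, img_mul_img v.mul_inv, ← hXYs, hB]
    · exact ⟨⟨B₁, hB₁mem⟩, 1, by rw [mul_one]; exact hfac1⟩
    · -- A does not divide C₁ in PfinOne
      rintro ⟨X, Y, hXY⟩
      obtain ⟨hXf, hX1⟩ := mem_PfinOne.mp X.2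
      obtain ⟨hYf, hY1⟩ := mem_PfinOne.mp Y.2
      have hXYs : C₁ = (X : Set H) * (A : Set H) * (Y : Set H) := by
        have := congrArg (Subtype.val) hXY
        simpa using this
      refine hCnd ⟨⟨(fun x => q * x * ((u⁻¹ : Hˣ) : H)) '' (X : Set H),
        mem_PfinTimes.mpr ⟨hXf.image _, q * 1 * ((u⁻¹ : Hˣ) : H), Set.mem_image_of_mem _ hX1,
          by simpa using hqu.mul (u⁻¹ : Hˣ).isUnit⟩⟩,
        ⟨(fun y => ((v⁻¹ : Hˣ) : H) * y * (v : H)) '' (Y : Set H),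
        mem_PfinTimes.mpr ⟨hYf.image _, ((v⁻¹ : Hˣ) : H) * 1 * (v : H), Set.mem_image_of_mem _ hY1, by simp⟩⟩, ?_⟩
      apply Subtype.ext
      show (C : Set H) = ((fun x => q * x * ((u⁻¹ : Hˣ) : H)) '' (X : Set H)) *
        ((fun a => (u : H) * a * (v : H)) '' (A : Set H)) * ((fun y => ((v⁻¹ : Hˣ) : H) * y * (v : H)) '' (Y : Set H))
      rw [img_mul_img u.inv_mul, img_mul_img v.mul_inv, ← hXYs, hC]
    · -- B₁ is not a unit-divisor in PfinOne
      rintro ⟨P, Q, hPQ⟩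
      obtain ⟨hPf, hP1⟩ := mem_PfinOne.mp P.2
      obtain ⟨hQf, hQ1⟩ := mem_PfinOne.mp Q.2
      have hPQs : (1 : Set H) = (P : Set H) * B₁ * (Q : Set H) := by
        have := congrArg (Subtype.val) hPQ
        simpa using this
      have hB₁one : B₁ = {1} := by
        apply Set.eq_singleton_iff_unique_mem.mpr
        refine ⟨hB₁mem.2, fun x hx => ?_⟩
        have : (1 : H) * x * 1 ∈ ((P : Set H) * B₁ * (Q : Set H)) :=
          Set.mul_mem_mul (Set.mul_mem_mul hP1 hx) hQ1
        rw [← hPQs, Set.mem_one] at this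
        simpa using this
      have hBsing : (B : Set H) = {(u : H) * 1 * p} := by
        rw [← hB, hB₁one, Set.image_singleton]
      refine hBnu ⟨⟨{q * ((u⁻¹ : Hˣ) : H)}, mem_PfinTimes.mpr ⟨Set.finite_singleton _, q * ((u⁻¹ : Hˣ) : H),
        rfl, hqu.mul (u⁻¹ : Hˣ).isUnit⟩⟩, 1, ?_⟩
      apply Subtype.ext
      show (1 : Set H) = ({q * ((u⁻¹ : Hˣ) : H)} : Set H) * (B : Set H) * 1
      rw [hBsing, mul_one, Set.singleton_mul_singleton]
      rw [show q * ((u⁻¹ : Hˣ) : H) * ((u : H) * 1 * p) = q * (((u⁻¹ : Hˣ) : H) * (u : H)) * 1 * p by simp [mul_assoc]]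
      simp [hqp, Set.singleton_one]
    · -- C₁ is not a unit-divisor in PfinOne
      rintro ⟨P, Q, hPQ⟩
      obtain ⟨hPf, hP1⟩ := mem_PfinOne.mp P.2
      obtain ⟨hQf, hQ1⟩ := mem_PfinOne.mp Q.2
      have hPQs : (1 : Set H) = (P : Set H) * C₁ * (Q : Set H) := by
        have := congrArg (Subtype.val) hPQ
        simpa using this
      have hC₁one : C₁ = {1} := by
        apply Set.eq_singleton_iff_unique_mem.mpr
        refine ⟨hC₁mem.2, fun x hx => ?_⟩
        have : (1 : H) * x * 1 ∈ ((P : Set H) * C₁ * (Q : Set H)) :=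
          Set.mul_mem_mul (Set.mul_mem_mul hP1 hx) hQ1
        rw [← hPQs, Set.mem_one] at this
        simpa using this
      have hCsing : (C : Set H) = {q * 1 * (v : H)} := by
        rw [← hC, hC₁one, Set.image_singleton]
      refine hCnu ⟨⟨{((v⁻¹ : Hˣ) : H) * p}, mem_PfinTimes.mpr ⟨Set.finite_singleton _, ((v⁻¹ : Hˣ) : H) * p,
        rfl, (v⁻¹ : Hˣ).isUnit.mul hpu⟩⟩, 1, ?_⟩
      apply Subtype.ext
      show (1 : Set H) = ({((v⁻¹ : Hˣ) : H) * p} : Set H) * (C : Set H) * 1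
      rw [hCsing, mul_one, Set.singleton_mul_singleton]
      rw [show ((v⁻¹ : Hˣ) : H) * p * (q * 1 * (v : H)) = ((v⁻¹ : Hˣ) : H) * (p * q) * 1 * (v : H) by simp [mul_assoc]]
      simp [hpq, Set.singleton_one]

theorem pfinTimes_irreducible_of_pfinOne_irreducible {H : Type*} [Monoid H]
    (hH : DedekindFiniteM H) (A : PfinOne H) (hA : IsIrredTS A)
    (u v : H) (hu : IsUnit u) (hv : IsUnit v) :
    IsIrredTS (⟨(fun a => u * a * v) '' (A : Set H),
      mem_PfinTimes.mpr ⟨((mem_PfinOne.mp A.2).1).image _,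
        u * 1 * v, Set.mem_image_of_mem _ (mem_PfinOne.mp A.2).2,
        by simpa using hu.mul hv⟩⟩ : PfinTimes H) := by
  obtain ⟨u', hu'⟩ := hu
  obtain ⟨v', hv'⟩ := hv
  exact pfin_aux hH A hA u' v' _ _ (by rw [hu', hv'])
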